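/- Let n ≥ 1 and μ1 ∈ ℝ with n+μ1 > 1, let δ ≥ 0, and set κ := (μ1−1−√δ)/2. If n − d_*(n+μ1) < √δ < n, then p_F(n+κ) < 2/(n−√δ). -/

import Mathlib

/-- Fujita exponent `p_F(ν) = 1 + 2/ν` (as a real number; meaningful for `ν > 0`). -/
noncomputable def pF (ν : ℝ) : ℝ := 1 + 2 / ν

/-- `d_*(ν)`: zero for `ν ≤ 1`, and `(−1−ν+√(ν²+10ν−7))/2` for `ν > 1`. -/
noncomputable def dStar (ν : ℝ) : ℝ :=
  if 1 < ν then (-1 - ν + Real.sqrt (ν ^ 2 + 10 * ν - 7)) / 2 else 0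

/-- If `n − d_*(n+μ1) < √δ < n` (with `n+μ1 > 1`), then `p_F(n+κ) < 2/(n−√δ)`. -/
theorem pF_lt_transition (n μ1 δ : ℝ) (hn : 1 ≤ n) (hnμ : 1 < n + μ1)
    (hδ : 0 ≤ δ) (h1 : n - dStar (n + μ1) < Real.sqrt δ) (h2 : Real.sqrt δ < n) :
    pF (n + (μ1 - 1 - Real.sqrt δ) / 2) < 2 / (n - Real.sqrt δ) := by
  set s := Real.sqrt δ with hs
  have hs0 : 0 ≤ s := Real.sqrt_nonneg δ
  have hdisc : 0 ≤ (n + μ1) ^ 2 + 10 * (n + μ1) - 7 := by nlinarith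
  set r := Real.sqrt ((n + μ1) ^ 2 + 10 * (n + μ1) - 7) with hrdef
  have hr2 : r ^ 2 = (n + μ1) ^ 2 + 10 * (n + μ1) - 7 := Real.sq_sqrt hdisc
  have hr0 : 0 ≤ r := Real.sqrt_nonneg _
  have hd : dStar (n + μ1) = (-1 - (n + μ1) + r) / 2 := by
    rw [dStar, if_pos hnμ]
  rw [hd] at h1
  have ha : 0 < n - s := by linarith
  have hb : 0 < n + (μ1 - 1 - s) / 2 := by linarith
  have key : (n - s) ^ 2 + (n - s) * (n + μ1 + 1) - 2 * (n + μ1 - 1) < 0 := by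
    nlinarith [sq_nonneg (2 * (n - s) + (n + μ1) + 1 - r)]
  have hpf : pF (n + (μ1 - 1 - s) / 2)
      = ((n + (μ1 - 1 - s) / 2) + 2) / (n + (μ1 - 1 - s) / 2) := by
    have hb' : n + (μ1 - 1 - s) / 2 ≠ 0 := ne_of_gt hb
    rw [pF]; field_simp
    rw [add_div, div_self (by linarith : 0 < 2 * n + (μ1 - 1 - s)).ne']
  rw [hpf, div_lt_div_iff₀ hb ha]
  nlinarith [key]
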